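/- Let X and Y be random variables on a probability space with joint law P_{XY} and marginal laws P_X, P_Y. For every measurable critic function f : 𝒳 × 𝒴 → ℝ such that f is P_{XY}-integrable and e^{f} is (P_X ⊗ P_Y)-integrable, the mutual information satisfies I(X;Y) ≥ E_{P_{XY}}[f(X,Y)] − E_{P_X ⊗ P_Y}[e^{f(x,y)}]. -/

import Mathlib

open MeasureTheory Real

open Classical in
/-- Kullback–Leibler divergence between two measures, valued in the extended reals:
it is the integral of the log-likelihood ratio when `μ ≪ ν` and the log-likelihood
ratio is `μ`-integrable, and `⊤` otherwise. -/
noncomputable def klDiv {α : Type*} [MeasurableSpace α] (μ ν : Measure α) : EReal :=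
  if μ ≪ ν ∧ Integrable (llr μ ν) μ then ((∫ x, llr μ ν x ∂μ : ℝ) : EReal) else ⊤

/-- Mutual information between random variables `X` and `Y` on a probability space
`(Ω, P)`: the KL divergence between the joint law of `(X, Y)` and the product of the
marginal laws of `X` and `Y`. -/
noncomputable def mutualInfo {Ω 𝒳 𝒴 : Type*} [MeasurableSpace Ω] [MeasurableSpace 𝒳]
    [MeasurableSpace 𝒴] (P : Measure Ω) (X : Ω → 𝒳) (Y : Ω → 𝒴) : EReal :=
  klDiv (P.map (fun ω => (X ω, Y ω))) ((P.map X).prod (P.map Y))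

lemma aux_dv {α : Type*} [MeasurableSpace α] (μ ν : Measure α) [IsFiniteMeasure μ] [SigmaFinite ν]
    (hμν : μ ≪ ν) (f : α → ℝ) (hf : Measurable f)
    (h1 : Integrable f μ) (h2 : Integrable (fun x => Real.exp (f x)) ν)
    (hllr : Integrable (llr μ ν) μ) :
    ∫ x, f x ∂μ - ∫ x, Real.exp (f x) ∂ν ≤ ∫ x, llr μ ν x ∂μ := by
  set g : α → ℝ := fun x => Real.exp (f x) / (μ.rnDeriv ν x).toReal with hg_def
  have hg_meas : Measurable g := (hf.exp).div (μ.measurable_rnDeriv ν).ennreal_toReal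
  have hg_nonneg : ∀ x, 0 ≤ g x := fun x => div_nonneg (Real.exp_pos _).le ENNReal.toReal_nonneg
  -- lintegral bound
  have h_lint : ∫⁻ x, ENNReal.ofReal (g x) ∂μ ≤ ∫⁻ x, ENNReal.ofReal (Real.exp (f x)) ∂ν := by
    rw [← lintegral_rnDeriv_mul hμν (by fun_prop : AEMeasurable (fun x => ENNReal.ofReal (g x)) ν)]
    refine lintegral_mono_ae ?_
    filter_upwards [Measure.rnDeriv_lt_top μ ν] with x hx
    rcases eq_or_ne (μ.rnDeriv ν x) 0 with h0 | h0
    · simp [h0]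
    · have hpos : 0 < (μ.rnDeriv ν x).toReal := ENNReal.toReal_pos h0 hx.ne
      rw [hg_def]
      simp only []
      rw [ENNReal.ofReal_div_of_pos hpos, ENNReal.ofReal_toReal hx.ne,
        ENNReal.mul_div_cancel h0 hx.ne]
  have h_lt_top : ∫⁻ x, ENNReal.ofReal (g x) ∂μ < ⊤ :=
    h_lint.trans_lt h2.lintegral_lt_top
  have hg_int : Integrable g μ := by
    refine ⟨hg_meas.aestronglyMeasurable, ?_⟩
    rw [hasFiniteIntegral_iff_norm]
    simpa [Real.norm_of_nonneg (hg_nonneg _)] using h_lt_top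
  -- pointwise bound a.e. μ : f - llr ≤ g
  have h_ptwise : ∀ᵐ x ∂μ, f x - llr μ ν x ≤ g x := by
    filter_upwards [Measure.rnDeriv_pos hμν, hμν.ae_le (Measure.rnDeriv_lt_top μ ν)] with x hx0 hxt
    have hr : 0 < (μ.rnDeriv ν x).toReal := ENNReal.toReal_pos hx0.ne' hxt.ne
    have := Real.add_one_le_exp (f x - llr μ ν x)
    have h2' : f x - llr μ ν x ≤ Real.exp (f x - llr μ ν x) :=
      le_trans (by linarith [Real.add_one_le_exp (f x - llr μ ν x)]) le_rfl
    calc f x - llr μ ν x ≤ Real.exp (f x - llr μ ν x) := by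
          linarith [Real.add_one_le_exp (f x - llr μ ν x)]
      _ = g x := by
          rw [Real.exp_sub, hg_def, llr, Real.exp_log hr]
  have h_int_sub : ∫ x, (f x - llr μ ν x) ∂μ ≤ ∫ x, g x ∂μ :=
    integral_mono_ae (h1.sub hllr) hg_int h_ptwise
  have h_g_le : ∫ x, g x ∂μ ≤ ∫ x, Real.exp (f x) ∂ν := by
    rw [integral_eq_lintegral_of_nonneg_ae (Filter.Eventually.of_forall hg_nonneg)
      hg_meas.aestronglyMeasurable,
      integral_eq_lintegral_of_nonneg_ae (Filter.Eventually.of_forall fun x => (Real.exp_pos _).le)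
      hf.exp.aestronglyMeasurable]
    exact ENNReal.toReal_mono h2.lintegral_lt_top.ne h_lint
  rw [integral_sub h1 hllr] at h_int_sub
  linarith

/-- **TUBA lower bound with baseline `a(y) ≡ 1`.** For every measurable critic
`f : 𝒳 × 𝒴 → ℝ` such that `f` is integrable w.r.t. the joint law `P_{XY}` and
`e^f` is integrable w.r.t. the product of the marginals `P_X ⊗ P_Y`,
`I(X;Y) ≥ E_{P_{XY}}[f(X,Y)] - E_{P_X ⊗ P_Y}[e^{f(x,y)}]`. -/
theorem mutualInfo_ge_tuba_one {Ω 𝒳 𝒴 : Type*} [MeasurableSpace Ω] [MeasurableSpace 𝒳]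
    [MeasurableSpace 𝒴] (P : Measure Ω) [IsProbabilityMeasure P]
    (X : Ω → 𝒳) (Y : Ω → 𝒴) (hX : Measurable X) (hY : Measurable Y)
    (f : 𝒳 × 𝒴 → ℝ) (hf : Measurable f)
    (h_int₁ : Integrable f (P.map (fun ω => (X ω, Y ω))))
    (h_int₂ : Integrable (fun p => Real.exp (f p)) ((P.map X).prod (P.map Y))) :
    ((∫ p, f p ∂(P.map (fun ω => (X ω, Y ω)))
        - ∫ p, Real.exp (f p) ∂((P.map X).prod (P.map Y)) : ℝ) : EReal)
      ≤ mutualInfo P X Y := by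
  have h1 : IsProbabilityMeasure (P.map (fun ω => (X ω, Y ω))) :=
    Measure.isProbabilityMeasure_map (hX.prodMk hY).aemeasurable
  have h2 : IsProbabilityMeasure (P.map X) := Measure.isProbabilityMeasure_map hX.aemeasurable
  have h3 : IsProbabilityMeasure (P.map Y) := Measure.isProbabilityMeasure_map hY.aemeasurable
  unfold mutualInfo klDiv
  split_ifs with h
  · exact_mod_cast aux_dv _ _ h.1 f hf h_int₁ h_int₂ h.2
  · exact le_top
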